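/- Let G = (V, E) be a finite nonempty DAG and let c ≥ 2 be a real number. Then the weighting function ρ : V → ℝ defined by ρ(v) = (c·|V|)^(depth(G) − level(v)) is c-admissible; that is, for every v ∈ V, (c·|V|)^(depth(G) − level(v)) ≥ 1 + c · Σ_{w ∈ Γ(v)} (c·|V|)^(depth(G) − level(w)). -/
import Mathlib


open scoped Classical

/-- `level E v`: the number of edges in a longest directed path (w.r.t. edge
relation `E`) ending at `v`.  In a finite DAG every directed path has fewer
than `Fintype.card V` edges, so it suffices to take the supremum over
`k < Fintype.card V` of those `k` for which a directed path with `k` edges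
ending at `v` exists. -/
noncomputable def level {V : Type*} [Fintype V] (E : V → V → Prop) (v : V) : ℕ :=
  ((Finset.range (Fintype.card V)).filter (fun k => ∃ f : Fin (k + 1) → V,
      f (Fin.last k) = v ∧ ∀ i : Fin k, E (f i.castSucc) (f i.succ))).sup id

/-- `depth E`: the maximum level of any vertex. -/
noncomputable def depth {V : Type*} [Fintype V] (E : V → V → Prop) : ℕ :=
  Finset.univ.sup (fun v => level E v)

section Aux

variable {V : Type*} [Fintype V]

lemma path_transGen {E : V → V → Prop} {k : ℕ} {f : Fin (k+1) → V}
    (hf : ∀ i : Fin k, E (f i.castSucc) (f i.succ)) :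
    ∀ j, (hj : j ≤ k) → ∀ i, (hi : i < j) →
      Relation.TransGen E (f ⟨i, by omega⟩) (f ⟨j, by omega⟩) := by
  intro j
  induction j with
  | zero => intro _ i h; omega
  | succ n ih =>
    intro hj i h
    have edge : E (f ⟨n, by omega⟩) (f ⟨n+1, by omega⟩) := hf ⟨n, by omega⟩
    rcases Nat.lt_or_ge i n with h' | h'
    · exact (ih (by omega) i h').tail edge
    · have hin : i = n := by omega
      subst hin
      exact Relation.TransGen.single edge

lemma path_inj {E : V → V → Prop} (hacyc : ∀ v : V, ¬ Relation.TransGen E v v)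
    {k : ℕ} {f : Fin (k+1) → V}
    (hf : ∀ i : Fin k, E (f i.castSucc) (f i.succ)) :
    Function.Injective f := by
  intro i j hij
  by_contra hne
  rcases lt_or_gt_of_ne (fun h : i = j => hne h) with h | h
  · have := path_transGen hf j.1 (by omega) i.1 h
    rw [Fin.eta, Fin.eta, hij] at this
    exact hacyc _ this
  · have := path_transGen hf i.1 (by omega) j.1 h
    rw [Fin.eta, Fin.eta, hij] at this
    exact hacyc _ this

lemma level_spec [Nonempty V] (E : V → V → Prop) (v : V) :
    ∃ f : Fin (level E v + 1) → V,
      f (Fin.last (level E v)) = v ∧ ∀ i : Fin (level E v), E (f i.castSucc) (f i.succ) := by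
  classical
  set S := ((Finset.range (Fintype.card V)).filter (fun k => ∃ f : Fin (k + 1) → V,
      f (Fin.last k) = v ∧ ∀ i : Fin k, E (f i.castSucc) (f i.succ))) with hS
  have h0 : (0 : ℕ) ∈ S := by
    simp only [hS, Finset.mem_filter, Finset.mem_range]
    refine ⟨Fintype.card_pos, fun _ => v, rfl, fun i => i.elim0⟩
  obtain ⟨b, hb, hsup⟩ := Finset.exists_mem_eq_sup S ⟨0, h0⟩ id
  have : level E v = b := hsup
  rw [this]
  exact (Finset.mem_filter.mp hb).2

lemma succ_le_level_of_path {E : V → V → Prop}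
    (hacyc : ∀ v : V, ¬ Relation.TransGen E v v) {k : ℕ} {v w : V}
    (f : Fin (k+1) → V) (hlast : f (Fin.last k) = v)
    (hf : ∀ i : Fin k, E (f i.castSucc) (f i.succ)) (hvw : E v w) :
    k + 1 ≤ level E w := by
  classical
  set g : Fin (k + 2) → V := fun j => if h : j.1 < k + 1 then f ⟨j.1, h⟩ else w with hg
  have hglast : g (Fin.last (k+1)) = w := by simp [hg, Fin.last]
  have hgedge : ∀ i : Fin (k+1), E (g i.castSucc) (g i.succ) := by
    intro i
    have hcs : (i.castSucc : Fin (k+2)).1 = i.1 := rfl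
    have hsucc : (i.succ : Fin (k+2)).1 = i.1 + 1 := rfl
    rcases Nat.lt_or_ge i.1 k with h | h
    · have e1 : g i.castSucc = f ⟨i.1, by omega⟩ := by
        simp only [hg]
        rw [dif_pos (show (i.castSucc : Fin (k+2)).1 < k + 1 by omega)]
        exact congrArg f (Fin.ext hcs)
      have e2 : g i.succ = f ⟨i.1 + 1, by omega⟩ := by
        simp only [hg]
        rw [dif_pos (show (i.succ : Fin (k+2)).1 < k + 1 by omega)]
        exact congrArg f (Fin.ext hsucc)
      rw [e1, e2]
      exact hf ⟨i.1, h⟩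
    · have hik : i.1 = k := by omega
      have e1 : g i.castSucc = v := by
        simp only [hg]
        rw [dif_pos (show (i.castSucc : Fin (k+2)).1 < k + 1 by omega)]
        rw [← hlast]
        congr 1
        simp [Fin.last, Fin.ext_iff, hcs, hik]
      have e2 : g i.succ = w := by
        simp only [hg]
        rw [dif_neg (show ¬ (i.succ : Fin (k+2)).1 < k + 1 by omega)]
      rw [e1, e2]
      exact hvw
  have hginj : Function.Injective g := path_inj hacyc hgedge
  have hcard : k + 2 ≤ Fintype.card V := by
    simpa using Fintype.card_le_of_injective g hginj
  have hmem : k + 1 ∈ ((Finset.range (Fintype.card V)).filter (fun m => ∃ f : Fin (m + 1) → V,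
      f (Fin.last m) = w ∧ ∀ i : Fin m, E (f i.castSucc) (f i.succ))) := by
    simp only [Finset.mem_filter, Finset.mem_range]
    exact ⟨by omega, g, hglast, hgedge⟩
  exact Finset.le_sup (f := id) hmem

lemma level_lt_of_edge [Nonempty V] {E : V → V → Prop}
    (hacyc : ∀ v : V, ¬ Relation.TransGen E v v) {v w : V} (hvw : E v w) :
    level E v < level E w := by
  obtain ⟨f, hlast, hf⟩ := level_spec E v
  exact succ_le_level_of_path hacyc f hlast hf hvw

lemma level_le_depth (E : V → V → Prop) (v : V) : level E v ≤ depth E :=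
  Finset.le_sup (Finset.mem_univ v)

end Aux

/-- In a finite nonempty DAG, for any real `c ≥ 2`, the weighting
function `ρ(v) = (c·|V|)^(depth(G) − level(v))` is `c`-admissible. -/
theorem stmt0 {V : Type*} [Fintype V] [Nonempty V] (E : V → V → Prop)
    (hacyc : ∀ v : V, ¬ Relation.TransGen E v v)
    (c : ℝ) (hc : 2 ≤ c) (v : V) :
    (c * (Fintype.card V : ℝ)) ^ (depth E - level E v)
      ≥ 1 + c * ∑ w ∈ Finset.univ.filter (fun w => E v w),
          (c * (Fintype.card V : ℝ)) ^ (depth E - level E w) := by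
  classical
  set n := Fintype.card V with hn
  have hn1 : 1 ≤ n := Fintype.card_pos
  set x : ℝ := c * (n : ℝ) with hx
  have hx2 : 2 ≤ x := by
    have : (1 : ℝ) ≤ (n : ℝ) := by exact_mod_cast hn1
    nlinarith
  have hx1 : (1 : ℝ) ≤ x := by linarith
  set d := depth E with hd
  set lv := level E v with hlv
  rcases (Finset.univ.filter (fun w => E v w)).eq_empty_or_nonempty with he | ⟨w0, hw0⟩
  · rw [he]
    simp only [Finset.sum_empty, mul_zero, add_zero, ge_iff_le]
    exact one_le_pow₀ hx1
  · have hEvw0 : E v w0 := (Finset.mem_filter.mp hw0).2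
    have hlvd : lv < d := lt_of_lt_of_le (level_lt_of_edge hacyc hEvw0) (level_le_depth E w0)
    set e := d - lv with he'
    have he1 : 1 ≤ e := by omega
    set X : ℝ := x ^ (e - 1) with hX
    have hX1 : (1 : ℝ) ≤ X := one_le_pow₀ hx1
    have hxe : x ^ e = x * X := by
      rw [hX, ← pow_succ']
      congr 1
      omega
    -- each term is at most X
    have hterm : ∀ w ∈ Finset.univ.filter (fun w => E v w), x ^ (d - level E w) ≤ X := by
      intro w hw
      have hEvw : E v w := (Finset.mem_filter.mp hw).2
      have hlw : lv < level E w := level_lt_of_edge hacyc hEvw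
      have hexp : d - level E w ≤ e - 1 := by omega
      exact pow_le_pow_right₀ hx1 hexp
    have hcardle : (Finset.univ.filter (fun w => E v w)).card ≤ n - 1 := by
      have hsub : Finset.univ.filter (fun w => E v w) ⊆ Finset.univ.erase v := by
        intro w hw
        have hEvw : E v w := (Finset.mem_filter.mp hw).2
        refine Finset.mem_erase.mpr ⟨?_, Finset.mem_univ w⟩
        intro hwv
        subst hwv
        exact hacyc w (Relation.TransGen.single hEvw)
      have := Finset.card_le_card hsub
      simpa [Finset.card_erase_of_mem, hn] using this
    have hsum : ∑ w ∈ Finset.univ.filter (fun w => E v w), x ^ (d - level E w)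
        ≤ ((n : ℝ) - 1) * X := by
      calc ∑ w ∈ Finset.univ.filter (fun w => E v w), x ^ (d - level E w)
          ≤ ∑ _w ∈ Finset.univ.filter (fun w => E v w), X := Finset.sum_le_sum hterm
        _ = ((Finset.univ.filter (fun w => E v w)).card : ℝ) * X := by
            rw [Finset.sum_const, nsmul_eq_mul]
        _ ≤ ((n : ℝ) - 1) * X := by
            apply mul_le_mul_of_nonneg_right _ (by linarith)
            have : ((Finset.univ.filter (fun w => E v w)).card : ℝ) ≤ ((n - 1 : ℕ) : ℝ) := by
              exact_mod_cast hcardle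
            calc ((Finset.univ.filter (fun w => E v w)).card : ℝ)
                ≤ ((n - 1 : ℕ) : ℝ) := this
              _ ≤ (n : ℝ) - 1 := by
                  have : ((n - 1 : ℕ) : ℝ) = (n : ℝ) - 1 := by
                    have : (1 : ℕ) ≤ n := hn1
                    push_cast [Nat.cast_sub this]
                    ring
                  linarith [this.le]
    rw [ge_iff_le, hxe]
    have hc0 : (0 : ℝ) ≤ c := by linarith
    have h2 : c * ∑ w ∈ Finset.univ.filter (fun w => E v w), x ^ (d - level E w)
        ≤ c * (((n : ℝ) - 1) * X) := mul_le_mul_of_nonneg_left hsum hc0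
    have hn1' : (1 : ℝ) ≤ (n : ℝ) := by exact_mod_cast hn1
    nlinarith [hX1, hx2, hc]
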